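/- For n ≥ 2 and A = K[x]/(x^{n+1}) with maximal ideal m = (x), the group G of algebra automorphisms of A fixing x modulo x^2 (i.e., x ↦ x + a_2 x^2 + … + a_n x^n) acts transitively on the set of hyperplanes U ⊂ m that do not contain x^n. Consequently, any such hyperplane U can be mapped by an automorphism of A to U_0 = span(x, x^2, …, x^{n−1}). -/

import Mathlib

set_option maxHeartbeats 1000000
open Polynomial

namespace AutoHyp

variable (K : Type*) [Field K] (n : ℕ)

noncomputable abbrev xA : Polynomial K ⧸ Ideal.span {(X : Polynomial K) ^ (n + 1)} :=
  Ideal.Quotient.mk _ X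

noncomputable def MM (i : ℕ) :
    Submodule K (Polynomial K ⧸ Ideal.span {(X : Polynomial K) ^ (n + 1)}) :=
  Submodule.span K (Set.range fun j : ℕ => xA K n ^ (i + j))

variable {K n}

theorem xA_pow_zero {e : ℕ} (he : n + 1 ≤ e) : xA K n ^ e = 0 := by
  rw [xA, ← map_pow, Ideal.Quotient.eq_zero_iff_mem, Ideal.mem_span_singleton]
  exact pow_dvd_pow X he

theorem pow_mem_MM {i e : ℕ} (h : i ≤ e) : xA K n ^ e ∈ MM K n i := by
  have he : e = i + (e - i) := by omega
  rw [he]; exact Submodule.subset_span ⟨e - i, rfl⟩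

theorem MM_mono {i j : ℕ} (h : i ≤ j) : MM K n j ≤ MM K n i :=
  Submodule.span_le.2 (by rintro _ ⟨k, rfl⟩; exact pow_mem_MM (by omega))

theorem MM_mul {a b : ℕ} {v w} (hv : v ∈ MM K n a) (hw : w ∈ MM K n b) :
    v * w ∈ MM K n (a + b) := by
  have h := Submodule.mul_mem_mul hv hw
  rw [MM, MM, Submodule.span_mul_span] at h
  refine Submodule.span_le.2 ?_ h
  rintro _ ⟨_, ⟨j, rfl⟩, _, ⟨k, rfl⟩, rfl⟩
  simp only [← pow_add]
  exact pow_mem_MM (by omega)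

theorem MM_bot {i : ℕ} (h : n + 1 ≤ i) : MM K n i = ⊥ := by
  rw [MM, Submodule.span_eq_bot]
  rintro _ ⟨j, rfl⟩; exact xA_pow_zero (by omega)

-- KEY
theorem key_binom {h} (hh : h ∈ MM K n 2) (i : ℕ) :
    (xA K n + h) ^ i - xA K n ^ i ∈ MM K n (i + 1) := by
  induction i with
  | zero => simp only [pow_zero, sub_self]; exact Submodule.zero_mem _
  | succ i ih =>
    have e : (xA K n + h) ^ (i + 1) - xA K n ^ (i + 1)
        = ((xA K n + h) ^ i - xA K n ^ i) * (xA K n + h) + xA K n ^ i * h := by ring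
    rw [e]
    refine Submodule.add_mem _ ?_ ?_
    · have hx1 : xA K n + h ∈ MM K n 1 :=
        Submodule.add_mem _ (by simpa using pow_mem_MM (le_refl 1)) (MM_mono (by omega) hh)
      exact MM_mono (by omega) (MM_mul ih hx1)
    · exact MM_mono (by omega) (MM_mul (pow_mem_MM le_rfl) hh)

variable (K n)
noncomputable def pb : PowerBasis K (Polynomial K ⧸ Ideal.span {(X : Polynomial K) ^ (n + 1)}) :=
  AdjoinRoot.powerBasis (f := (X : Polynomial K) ^ (n + 1)) (pow_ne_zero _ X_ne_zero)

variable {K n}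

theorem pb_gen : (pb K n).gen = xA K n := rfl

theorem pb_dim : (pb K n).dim = n + 1 := by
  simp [pb, AdjoinRoot.powerBasis_dim]

noncomputable instance : Module.Finite K (Polynomial K ⧸ Ideal.span {(X : Polynomial K) ^ (n + 1)}) :=
  Module.Finite.of_basis (pb K n).basis

theorem linIndep_pow : LinearIndependent K fun i : Fin (n + 1) => xA K n ^ (i : ℕ) := by
  have h := ((pb K n).basis.linearIndependent).comp
    (fun i : Fin (n + 1) => Fin.cast pb_dim.symm i)
    (fun a b hab => by simpa [Fin.ext_iff] using hab)
  have hfun : (fun i : Fin (n + 1) => xA K n ^ (i : ℕ))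
      = ⇑(pb K n).basis ∘ fun i : Fin (n + 1) => Fin.cast pb_dim.symm i := by
    funext i
    simp [Function.comp, PowerBasis.coe_basis, pb_gen]
  rw [hfun]; exact h

theorem linIndep_shift {k : ℕ} (hk : k ≤ n) :
    LinearIndependent K fun i : Fin k => xA K n ^ (1 + (i : ℕ)) := by
  have h := (linIndep_pow (K := K) (n := n)).comp (fun i : Fin k => (⟨1 + (i : ℕ), by omega⟩ : Fin (n + 1)))
    (fun a b hab => by simp only [Fin.mk.injEq] at hab; exact Fin.ext (by omega))
  exact h

theorem MM_zero_top : MM K n 0 = ⊤ := by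
  rw [eq_top_iff, ← (pb K n).basis.span_eq]
  refine Submodule.span_le.2 ?_
  rintro _ ⟨i, rfl⟩
  rw [PowerBasis.coe_basis]
  exact MM_mono (Nat.zero_le _) (pow_mem_MM (le_refl (i : ℕ)))

theorem MM_pow {v} (hv : v ∈ MM K n 1) : ∀ e, v ^ e ∈ MM K n e := by
  intro e
  induction e with
  | zero => rw [MM_zero_top]; trivial
  | succ e ih => have h := MM_mul ih hv; rwa [← pow_succ] at h

theorem MM_eq_span (a : ℕ) :
    MM K n a = Submodule.span K {y | ∃ i, a ≤ i ∧ i ≤ n ∧ y = xA K n ^ i} := by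
  apply le_antisymm
  · refine Submodule.span_le.2 ?_
    rintro _ ⟨j, rfl⟩
    simp only []
    by_cases hj : a + j ≤ n
    · exact Submodule.subset_span ⟨a + j, by omega, hj, rfl⟩
    · rw [xA_pow_zero (by omega)]; exact Submodule.zero_mem _
  · refine Submodule.span_le.2 ?_
    rintro _ ⟨i, hi1, hi2, rfl⟩
    exact pow_mem_MM hi1

theorem span_set_eq_range (k : ℕ) :
    Submodule.span K {y | ∃ i, 1 ≤ i ∧ i ≤ k ∧ y = xA K n ^ i}
      = Submodule.span K (Set.range fun i : Fin k => xA K n ^ (1 + (i : ℕ))) := by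
  congr 1
  ext y
  constructor
  · rintro ⟨i, h1, h2, rfl⟩
    refine ⟨⟨i - 1, by omega⟩, ?_⟩
    simp only []
    congr 1
    omega
  · rintro ⟨i, rfl⟩
    exact ⟨1 + (i : ℕ), by omega, by omega, rfl⟩

noncomputable def endo (h : Polynomial K ⧸ Ideal.span {(X : Polynomial K) ^ (n + 1)})
    (hh : h ∈ MM K n 2) :
    (Polynomial K ⧸ Ideal.span {(X : Polynomial K) ^ (n + 1)}) →ₐ[K]
      (Polynomial K ⧸ Ideal.span {(X : Polynomial K) ^ (n + 1)}) :=
  AdjoinRoot.liftAlgHom ((X : Polynomial K) ^ (n + 1)) (Algebra.ofId K _) (xA K n + h) (by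
    rw [Polynomial.eval₂_X_pow]
    have h1 := key_binom hh (n + 1)
    rw [MM_bot (by omega : n + 1 ≤ n + 1 + 1), Submodule.mem_bot, sub_eq_zero] at h1
    rw [h1, xA_pow_zero le_rfl])

theorem endo_x (h : Polynomial K ⧸ Ideal.span {(X : Polynomial K) ^ (n + 1)})
    (hh : h ∈ MM K n 2) : endo h hh (xA K n) = xA K n + h := by
  unfold endo
  apply AdjoinRoot.liftAlgHom_root

theorem endo_bijective
    (ψ : (Polynomial K ⧸ Ideal.span {(X : Polynomial K) ^ (n + 1)}) →ₐ[K]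
      (Polynomial K ⧸ Ideal.span {(X : Polynomial K) ^ (n + 1)}))
    (hψ : ψ (xA K n) - xA K n ∈ MM K n 2) : Function.Bijective ψ := by
  have hx : ψ (xA K n) = xA K n + (ψ (xA K n) - xA K n) := by ring
  have main : ∀ k : ℕ, MM K n (n + 1 - k) ≤ LinearMap.range ψ.toLinearMap := by
    intro k
    induction k with
    | zero => rw [Nat.sub_zero, MM_bot le_rfl]; exact bot_le
    | succ k ih =>
      set i := n + 1 - (k + 1) with hidef
      rcases (by omega : n + 1 - k = i + 1 ∨ i = n + 1 - k) with hik | hik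
      · refine Submodule.span_le.2 ?_
        rintro _ ⟨j, rfl⟩
        simp only []
        rcases Nat.eq_zero_or_pos j with rfl | hj
        · have h2 := key_binom hψ i
          rw [← hik] at h2
          have h3 : (xA K n + (ψ (xA K n) - xA K n)) ^ i - xA K n ^ i
              ∈ LinearMap.range ψ.toLinearMap := ih h2
          have h4 : ψ (xA K n ^ i) ∈ LinearMap.range ψ.toLinearMap := ⟨xA K n ^ i, rfl⟩
          have h5 : xA K n ^ (i + 0)
              = ψ (xA K n ^ i) - ((xA K n + (ψ (xA K n) - xA K n)) ^ i - xA K n ^ i) := by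
            rw [map_pow, ← hx]; ring
          rw [h5]
          exact Submodule.sub_mem _ h4 h3
        · exact ih (pow_mem_MM (by omega))
      · rw [← hik] at ih; exact ih
  have hsurj : Function.Surjective ψ := by
    have h0 := main (n + 1)
    rw [Nat.sub_self, MM_zero_top] at h0
    intro y
    obtain ⟨z, hz⟩ := h0 (Submodule.mem_top : y ∈ ⊤)
    exact ⟨z, hz⟩
  exact ⟨(LinearMap.injective_iff_surjective (f := ψ.toLinearMap)).2 hsurj, hsurj⟩

theorem binom_formula (a : Polynomial K ⧸ Ideal.span {(X : Polynomial K) ^ (n + 1)})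
    (h0 : ∀ e, n + 1 ≤ e → a ^ e = 0) (t : K) {i κ : ℕ} (hi : 1 ≤ i) (hκ : 1 ≤ κ)
    (hbig : n + 1 ≤ i + 2 * (κ - 1)) :
    (a + t • a ^ κ) ^ i = a ^ i + ((i : K) * t) • a ^ (i + (κ - 1)) := by
  obtain ⟨i', rfl⟩ : ∃ i', i = i' + 1 := ⟨i - 1, by omega⟩
  rw [add_pow, Finset.sum_range_succ, Finset.sum_range_succ]
  have hz : ∀ j ∈ Finset.range i',
      a ^ j * (t • a ^ κ) ^ (i' + 1 - j)
        * (((i' + 1).choose j : ℕ) :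
            Polynomial K ⧸ Ideal.span {(X : Polynomial K) ^ (n + 1)}) = 0 := by
    intro j hj
    rw [Finset.mem_range] at hj
    have hd : 2 ≤ i' + 1 - j := by omega
    have h1 : κ * (i' + 1 - j) = (κ - 1) * (i' + 1 - j) + (i' + 1 - j) := by
      conv_lhs => rw [show κ = (κ - 1) + 1 by omega]
      ring
    have h2 : (κ - 1) * 2 ≤ (κ - 1) * (i' + 1 - j) := Nat.mul_le_mul_left _ hd
    have h3 : n + 1 ≤ j + κ * (i' + 1 - j) := by omega
    rw [_root_.smul_pow, ← pow_mul, mul_smul_comm, ← pow_add, h0 _ h3, smul_zero, zero_mul]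
  rw [Finset.sum_eq_zero hz, zero_add, Nat.sub_self, pow_zero, mul_one, Nat.choose_self,
    Nat.cast_one, mul_one]
  have e0 : i' + 1 - i' = 1 := by omega
  rw [e0, pow_one, Nat.choose_succ_self_right]
  have e1 : i' + 1 + (κ - 1) = i' + κ := by omega
  rw [e1]
  have e2 : a ^ i' * (t • a ^ κ) = t • a ^ (i' + κ) := by rw [mul_smul_comm, ← pow_add]
  rw [e2]
  have e3 : (t • a ^ (i' + κ))
      * (((i' + 1 : ℕ)) : Polynomial K ⧸ Ideal.span {(X : Polynomial K) ^ (n + 1)})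
      = (((i' + 1 : ℕ) : K) * t) • a ^ (i' + κ) := by
    rw [mul_comm, ← map_natCast (algebraMap K (Polynomial K ⧸
      Ideal.span {(X : Polynomial K) ^ (n + 1)})) (i' + 1), ← Algebra.smul_def, smul_smul]
  rw [e3]
  exact add_comm _ _

end AutoHyp

open AutoHyp

theorem automorphisms_transitive_on_hyperplanes
    (K : Type*) [Field K] [IsAlgClosed K] [CharZero K] (n : ℕ) (hn : 2 ≤ n)
    (U : Submodule K (Polynomial K ⧸ Ideal.span {(X : Polynomial K) ^ (n + 1)}))
    (hUm : U ≤ Submodule.span K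
      {y | ∃ i, 1 ≤ i ∧ i ≤ n ∧
        y = Ideal.Quotient.mk (Ideal.span {(X : Polynomial K) ^ (n + 1)}) X ^ i})
    (hhyp : Module.finrank K U + 1 = Module.finrank K (Submodule.span K
      {y | ∃ i, 1 ≤ i ∧ i ≤ n ∧
        y = Ideal.Quotient.mk (Ideal.span {(X : Polynomial K) ^ (n + 1)}) X ^ i}))
    (hxn : Ideal.Quotient.mk (Ideal.span {(X : Polynomial K) ^ (n + 1)}) X ^ n ∉ U) :
    ∃ φ : (Polynomial K ⧸ Ideal.span {(X : Polynomial K) ^ (n + 1)}) ≃ₐ[K]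
        (Polynomial K ⧸ Ideal.span {(X : Polynomial K) ^ (n + 1)}),
      (φ (Ideal.Quotient.mk (Ideal.span {(X : Polynomial K) ^ (n + 1)}) X) -
          Ideal.Quotient.mk (Ideal.span {(X : Polynomial K) ^ (n + 1)}) X ∈
        Submodule.span K
          {y | ∃ i, 2 ≤ i ∧ i ≤ n ∧
            y = Ideal.Quotient.mk (Ideal.span {(X : Polynomial K) ^ (n + 1)}) X ^ i}) ∧
      Submodule.map φ.toLinearMap U = Submodule.span K
        {y | ∃ i, 1 ≤ i ∧ i ≤ n - 1 ∧
          y = Ideal.Quotient.mk (Ideal.span {(X : Polynomial K) ^ (n + 1)}) X ^ i} := by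
  classical
  obtain ⟨m, rfl⟩ : ∃ m, n = m + 2 := ⟨n - 2, by omega⟩
  -- basic conversions
  have hUm' : U ≤ MM K (m + 2) 1 := hUm.trans (MM_eq_span 1).ge
  have hfrcard := finrank_span_eq_card (R := K) (linIndep_shift (n := m + 2) (le_refl (m + 2)))
  have hfr1 : Module.finrank K (MM K (m + 2) 1) = m + 2 := by
    rw [MM_eq_span 1, span_set_eq_range (m + 2), hfrcard, Fintype.card_fin]
  have hhyp' : Module.finrank K U + 1 = Module.finrank K (MM K (m + 2) 1) := by
    rw [MM_eq_span 1]; exact hhyp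
  have hfrU : Module.finrank K U = m + 1 := by omega
  -- the hyperplane condition
  have hxnU : xA K (m + 2) ^ (m + 2) ∉ U := hxn
  have hUle : U ⊔ Submodule.span K {xA K (m + 2) ^ (m + 2)} ≤ MM K (m + 2) 1 :=
    sup_le hUm' (Submodule.span_le.2 (Set.singleton_subset_iff.2 (pow_mem_MM (by omega))))
  have hlt : U < U ⊔ Submodule.span K {xA K (m + 2) ^ (m + 2)} := by
    refine lt_of_le_of_ne le_sup_left (fun hEq => hxnU ?_)
    have h := Submodule.mem_sup_right
      (Submodule.mem_span_singleton_self (xA K (m + 2) ^ (m + 2))) (S := U)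
    rw [← hEq] at h
    exact h
  have hfrlt := Submodule.finrank_lt_finrank_of_lt hlt
  have hfrle := Submodule.finrank_mono hUle
  have hsup : U ⊔ Submodule.span K {xA K (m + 2) ^ (m + 2)} = MM K (m + 2) 1 :=
    Submodule.eq_of_le_of_finrank_le hUle (by omega)
  -- choice of the coefficients c i
  have hcex : ∀ i : ℕ, ∃ cc : K,
      (1 ≤ i → i ≤ m + 1 → xA K (m + 2) ^ i - cc • xA K (m + 2) ^ (m + 2) ∈ U) := by
    intro i
    by_cases hi : 1 ≤ i ∧ i ≤ m + 1
    · have hmem : xA K (m + 2) ^ i ∈ U ⊔ Submodule.span K {xA K (m + 2) ^ (m + 2)} := by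
        rw [hsup]; exact pow_mem_MM hi.1
      rw [Submodule.mem_sup] at hmem
      obtain ⟨u, hu, z, hz, huv⟩ := hmem
      rw [Submodule.mem_span_singleton] at hz
      obtain ⟨cc, rfl⟩ := hz
      refine ⟨cc, fun _ _ => ?_⟩
      rw [← huv]
      simpa using hu
    · exact ⟨0, fun h1 h2 => absurd ⟨h1, h2⟩ hi⟩
  choose c hc using hcex
  -- U₀ and the decomposition of M 1 along U₀
  set U₀ : Submodule K (Polynomial K ⧸ Ideal.span {(X : Polynomial K) ^ (m + 2 + 1)}) :=
    Submodule.span K (Set.range fun i : Fin (m + 1) => xA K (m + 2) ^ (1 + (i : ℕ)))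
    with hU₀def
  have hsup0 : U₀ ⊔ Submodule.span K {xA K (m + 2) ^ (m + 2)} = MM K (m + 2) 1 := by
    apply le_antisymm
    · refine sup_le (Submodule.span_le.2 ?_) (Submodule.span_le.2 ?_)
      · rintro _ ⟨i, rfl⟩
        simp only []
        exact pow_mem_MM (by omega)
      · exact Set.singleton_subset_iff.2 (pow_mem_MM (by omega))
    · rw [MM_eq_span 1, span_set_eq_range (m + 2)]
      refine Submodule.span_le.2 ?_
      rintro _ ⟨i, rfl⟩
      simp only []
      by_cases hi : (i : ℕ) < m + 1
      · exact Submodule.mem_sup_left (Submodule.subset_span ⟨⟨(i : ℕ), hi⟩, rfl⟩)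
      · apply Submodule.mem_sup_right
        apply Submodule.subset_span
        rw [Set.mem_singleton_iff]
        have hieq : (i : ℕ) = m + 1 := by have := i.isLt; omega
        rw [hieq]
        congr 1
        omega
  have hbex : ∀ v ∈ MM K (m + 2) 1, ∃ b : K, v - b • xA K (m + 2) ^ (m + 2) ∈ U₀ := by
    intro v hv
    rw [← hsup0, Submodule.mem_sup] at hv
    obtain ⟨u, hu, z, hz, huv⟩ := hv
    rw [Submodule.mem_span_singleton] at hz
    obtain ⟨b, rfl⟩ := hz
    refine ⟨b, ?_⟩
    rw [← huv]
    simpa using hu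
  -- the inductive construction of the endomorphism
  have main : ∀ k : ℕ, k ≤ m + 1 →
      ∃ ψ : (Polynomial K ⧸ Ideal.span {(X : Polynomial K) ^ (m + 2 + 1)}) →ₐ[K]
        (Polynomial K ⧸ Ideal.span {(X : Polynomial K) ^ (m + 2 + 1)}),
      ψ (xA K (m + 2)) - xA K (m + 2) ∈ MM K (m + 2) 2 ∧
      ∀ i, m + 2 - k ≤ i → i ≤ m + 1 →
        ψ (xA K (m + 2)) ^ i - c i • xA K (m + 2) ^ (m + 2) ∈ U₀ := by
    intro k
    induction k with
    | zero =>
      intro _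
      refine ⟨AlgHom.id K _, by simpa using Submodule.zero_mem (MM K (m + 2) 2),
        fun i h1 h2 => absurd h1 (by omega)⟩
    | succ k ih =>
      intro hk1
      obtain ⟨ψ, hψ2, hψc⟩ := ih (by omega)
      have hψx1 : ψ (xA K (m + 2)) ∈ MM K (m + 2) 1 := by
        have hxx : xA K (m + 2) ∈ MM K (m + 2) 1 := by
          simpa using pow_mem_MM (n := m + 2) (le_refl 1)
        have h := Submodule.add_mem _ hxx (MM_mono (by omega) hψ2)
        simpa using h
      have hzero : ∀ e, m + 2 + 1 ≤ e → ψ (xA K (m + 2)) ^ e = 0 := by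
        intro e he
        have h := MM_pow hψx1 e
        rwa [MM_bot he, Submodule.mem_bot] at h
      have hψxn : ψ (xA K (m + 2)) ^ (m + 2) = xA K (m + 2) ^ (m + 2) := by
        have h := key_binom hψ2 (m + 2)
        rw [MM_bot (le_refl (m + 2 + 1)), Submodule.mem_bot, sub_eq_zero] at h
        have hxe : xA K (m + 2) + (ψ (xA K (m + 2)) - xA K (m + 2)) = ψ (xA K (m + 2)) := by
          ring
        rwa [hxe] at h
      set i₀ : ℕ := m + 2 - (k + 1) with hi₀
      obtain ⟨b, hb0⟩ := hbex _ (MM_mono (by omega : 1 ≤ i₀) (MM_pow hψx1 i₀))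
      set t : K := (c i₀ - b) / ((i₀ : ℕ) : K) with htdef
      have hκmem : t • xA K (m + 2) ^ (k + 2) ∈ MM K (m + 2) 2 :=
        Submodule.smul_mem _ _ (pow_mem_MM (by omega))
      set ψ' := ψ.comp (endo (t • xA K (m + 2) ^ (k + 2)) hκmem) with hψ'def
      have hψ'x : ψ' (xA K (m + 2))
          = ψ (xA K (m + 2)) + t • ψ (xA K (m + 2)) ^ (k + 2) := by
        rw [hψ'def, AlgHom.comp_apply, endo_x, map_add, map_smul, map_pow]
      refine ⟨ψ', ?_, ?_⟩
      · rw [hψ'x]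
        have he : ψ (xA K (m + 2)) + t • ψ (xA K (m + 2)) ^ (k + 2) - xA K (m + 2)
            = (ψ (xA K (m + 2)) - xA K (m + 2)) + t • ψ (xA K (m + 2)) ^ (k + 2) := by
          ring
        rw [he]
        exact Submodule.add_mem _ hψ2
          (Submodule.smul_mem _ _ (MM_mono (by omega) (MM_pow hψx1 (k + 2))))
      · intro i h1 h2
        have hfor' : ψ' (xA K (m + 2)) ^ i
            = ψ (xA K (m + 2)) ^ i
              + ((i : K) * t) • ψ (xA K (m + 2)) ^ (i + (k + 2 - 1)) := by
          rw [hψ'x]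
          exact binom_formula (ψ (xA K (m + 2))) hzero t (by omega) (by omega) (by omega)
        rcases eq_or_lt_of_le h1 with heq | hgt
        · subst heq
          rw [show i₀ + (k + 2 - 1) = m + 2 from by omega, hψxn] at hfor'
          rw [hfor']
          have hne : ((i₀ : ℕ) : K) ≠ 0 := Nat.cast_ne_zero.2 (by omega)
          have hteq : ((i₀ : ℕ) : K) * t = c i₀ - b := by
            rw [htdef, mul_comm, div_mul_cancel₀ _ hne]
          rw [hteq]
          have hre : ψ (xA K (m + 2)) ^ i₀ + (c i₀ - b) • xA K (m + 2) ^ (m + 2)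
              - c i₀ • xA K (m + 2) ^ (m + 2)
              = ψ (xA K (m + 2)) ^ i₀ - b • xA K (m + 2) ^ (m + 2) := by
            module
          rw [hre]
          exact hb0
        · rw [hzero (i + (k + 2 - 1)) (by omega), smul_zero, add_zero] at hfor'
          rw [hfor']
          exact hψc i (by omega) h2
  -- assemble
  obtain ⟨ψ, hψ2, hψc⟩ := main (m + 1) le_rfl
  have hbij := endo_bijective ψ hψ2
  have hψxn : ψ (xA K (m + 2)) ^ (m + 2) = xA K (m + 2) ^ (m + 2) := by
    have h := key_binom hψ2 (m + 2)
    rw [MM_bot (le_refl (m + 2 + 1)), Submodule.mem_bot, sub_eq_zero] at h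
    have hxe : xA K (m + 2) + (ψ (xA K (m + 2)) - xA K (m + 2)) = ψ (xA K (m + 2)) := by ring
    rwa [hxe] at h
  refine ⟨AlgEquiv.ofBijective ψ hbij, ?_, ?_⟩
  · have h := hψ2
    rw [MM_eq_span 2] at h
    exact h
  · -- the image of U
    set u : Fin (m + 1) → (Polynomial K ⧸ Ideal.span {(X : Polynomial K) ^ (m + 2 + 1)}) :=
      fun i => xA K (m + 2) ^ (1 + (i : ℕ)) - c (1 + (i : ℕ)) • xA K (m + 2) ^ (m + 2)
      with hudef
    have huU : ∀ i, u i ∈ U := fun i =>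
      hc (1 + (i : ℕ)) (by omega) (by have := i.isLt; omega)
    have huind : LinearIndependent K u := by
      rw [Fintype.linearIndependent_iff]
      intro g hg
      set G : Fin (m + 2) → K := fun j =>
        if h : (j : ℕ) < m + 1 then g ⟨(j : ℕ), h⟩
        else -(∑ i : Fin (m + 1), g i * c (1 + (i : ℕ))) with hGdef
      have hGc : ∀ j : Fin (m + 1), G j.castSucc = g j := by
        intro j
        have hlt : ((j.castSucc : Fin (m + 2)) : ℕ) < m + 1 := by have := j.isLt; simp; omega
        rw [hGdef]
        simp only []
        rw [dif_pos hlt]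
        exact congrArg g (Fin.ext (by simp))
      have hGl : G (Fin.last (m + 1)) = -(∑ i : Fin (m + 1), g i * c (1 + (i : ℕ))) := by
        rw [hGdef]
        simp only []
        rw [dif_neg (by simp)]
      have hterm : ∀ i : Fin (m + 1), g i • u i
          = g i • xA K (m + 2) ^ (1 + (i : ℕ))
            - (g i * c (1 + (i : ℕ))) • xA K (m + 2) ^ (m + 2) := by
        intro i
        rw [hudef]
        simp only []
        rw [smul_sub, smul_smul]
      have hcs : ∀ j : Fin (m + 1),
          G j.castSucc • xA K (m + 2) ^ (1 + ((j.castSucc : Fin (m + 2)) : ℕ))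
          = g j • xA K (m + 2) ^ (1 + (j : ℕ)) := by
        intro j
        rw [hGc, Fin.coe_castSucc]
      have hsum : ∑ j : Fin (m + 2), G j • xA K (m + 2) ^ (1 + (j : ℕ))
          = ∑ i : Fin (m + 1), g i • u i := by
        rw [Fin.sum_univ_castSucc]
        rw [Finset.sum_congr rfl (fun j _ => hcs j), hGl, Fin.val_last,
          show 1 + (m + 1) = m + 2 from by omega,
          Finset.sum_congr rfl (fun i _ => hterm i), Finset.sum_sub_distrib,
          ← Finset.sum_smul, neg_smul, ← sub_eq_add_neg]
      have hGzero := Fintype.linearIndependent_iff.1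
        (linIndep_shift (n := m + 2) (le_refl (m + 2))) G (by rw [hsum, hg])
      intro i
      have h := hGzero i.castSucc
      rwa [hGc] at h
    have hUspan : U = Submodule.span K (Set.range u) := by
      refine (Submodule.eq_of_le_of_finrank_le (Submodule.span_le.2 ?_) ?_).symm
      · rintro _ ⟨i, rfl⟩
        exact huU i
      · rw [finrank_span_eq_card huind, Fintype.card_fin, hfrU]
    have hmap : Submodule.map (AlgEquiv.ofBijective ψ hbij).toLinearMap U
        = Submodule.span K
          (Set.range (⇑(AlgEquiv.ofBijective ψ hbij).toLinearMap ∘ u)) := by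
      rw [hUspan, Submodule.map_span, Set.range_comp]
    have hval : ∀ i : Fin (m + 1),
        (⇑(AlgEquiv.ofBijective ψ hbij).toLinearMap ∘ u) i ∈ U₀ := by
      intro i
      have hval1 : (⇑(AlgEquiv.ofBijective ψ hbij).toLinearMap ∘ u) i
          = ψ (xA K (m + 2)) ^ (1 + (i : ℕ))
            - c (1 + (i : ℕ)) • xA K (m + 2) ^ (m + 2) := by
        show ψ (u i) = _
        rw [hudef]
        simp only []
        rw [map_sub, map_smul, map_pow, map_pow, hψxn]
      rw [hval1]
      exact hψc (1 + (i : ℕ)) (by omega) (by have := i.isLt; omega)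
    have hinj : LinearMap.ker (AlgEquiv.ofBijective ψ hbij).toLinearMap = ⊥ := by
      rw [LinearMap.ker_eq_bot]
      exact hbij.1
    have huind2 := huind.map' _ hinj
    have hle : Submodule.map (AlgEquiv.ofBijective ψ hbij).toLinearMap U ≤ U₀ := by
      rw [hmap]
      refine Submodule.span_le.2 ?_
      rintro _ ⟨i, rfl⟩
      exact hval i
    have hfrU₀ : Module.finrank K U₀ = m + 1 := by
      rw [hU₀def, finrank_span_eq_card (linIndep_shift (n := m + 2) (by omega)),
        Fintype.card_fin]
    have hfrmap : Module.finrank K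
        (Submodule.map (AlgEquiv.ofBijective ψ hbij).toLinearMap U) = m + 1 := by
      rw [hmap, finrank_span_eq_card huind2, Fintype.card_fin]
    have hfinal : Submodule.map (AlgEquiv.ofBijective ψ hbij).toLinearMap U = U₀ :=
      Submodule.eq_of_le_of_finrank_le hle (by omega)
    rw [span_set_eq_range (m + 2 - 1)]
    exact hfinal
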